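/- Let G ≤ Homeo⁺(S¹) be a group of orientation-preserving circle homeomorphisms such that every nontrivial element has at most two fixed points, and suppose two nontrivial elements g, h ∈ G each have exactly two fixed points and share a fixed point p. If moreover every nontrivial element of the subgroup H = ⟨g, h⟩ fixes p and has exactly two fixed points, then H has a second global fixed point: there is q ≠ p fixed by every element of H, and Fix(k) = {p, q} for every nontrivial k ∈ H. -/

import Mathlib

open Set

noncomputable section

instance homeoGroup {X : Type*} [TopologicalSpace X] : Group (X ≃ₜ X) where
  mul f g := g.trans f
  one := Homeomorph.refl X
  inv := Homeomorph.symm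
  mul_assoc f g h := rfl
  one_mul f := rfl
  mul_one f := rfl
  inv_mul_cancel f := by ext x; exact f.symm_apply_apply x

/-- A homeomorphism of the circle is orientation preserving if it admits a strictly
increasing lift to the real line through the universal covering `Circle.exp`. -/
def OrientationPreserving (f : Circle ≃ₜ Circle) : Prop :=
  ∃ F : ℝ → ℝ, StrictMono F ∧ ∀ x : ℝ, f (Circle.exp x) = Circle.exp (F x)

/-- The fixed point set of a circle homeomorphism. -/
def FixSet (f : Circle ≃ₜ Circle) : Set Circle := {x | f x = x}

namespace SGFP

variable {K : Type*} [Group K] {A B : ℝ} {T : K → ℝ → ℝ}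

/-- An action of a group `K` on the interval `(A,B)` by increasing homeomorphisms,
such that every nontrivial element has exactly one fixed point. -/
structure LineAction (K : Type*) [Group K] (A B : ℝ) (T : K → ℝ → ℝ) : Prop where
  lt : A < B
  mapsTo : ∀ (k : K), ∀ x ∈ Ioo A B, T k x ∈ Ioo A B
  mono : ∀ k : K, StrictMonoOn (T k) (Ioo A B)
  cont : ∀ k : K, ContinuousOn (T k) (Ioo A B)
  one : ∀ x ∈ Ioo A B, T (1 : K) x = x
  mul : ∀ k l : K, ∀ x ∈ Ioo A B, T (k * l) x = T k (T l x)
  uniq : ∀ k : K, k ≠ 1 → ∃! x, x ∈ Ioo A B ∧ T k x = x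

namespace LineAction

variable (L : LineAction K A B T)
include L

section Basic

theorem nonempty : (Ioo A B).Nonempty := nonempty_Ioo.2 L.lt

theorem inv_apply {k : K} {x : ℝ} (hx : x ∈ Ioo A B) : T k⁻¹ (T k x) = x := by
  have := L.mul k⁻¹ k x hx
  rw [inv_mul_cancel] at this
  rw [← this, L.one x hx]

theorem apply_inv {k : K} {x : ℝ} (hx : x ∈ Ioo A B) : T k (T k⁻¹ x) = x := by
  have := L.mul k k⁻¹ x hx
  rw [mul_inv_cancel] at this
  rw [← this, L.one x hx]

theorem lt_iff {k : K} {x y : ℝ} (hx : x ∈ Ioo A B) (hy : y ∈ Ioo A B) :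
    T k x < T k y ↔ x < y := by
  constructor
  · intro h
    rcases lt_trichotomy x y with h' | h' | h'
    · exact h'
    · simp [h'] at h
    · exact absurd (L.mono k hy hx h') (by simp [le_of_lt h])
  · exact fun h => L.mono k hx hy h

theorem le_iff {k : K} {x y : ℝ} (hx : x ∈ Ioo A B) (hy : y ∈ Ioo A B) :
    T k x ≤ T k y ↔ x ≤ y := by
  rw [← not_lt, ← not_lt, not_iff_not]
  exact L.lt_iff hy hx

theorem inj {k : K} {x y : ℝ} (hx : x ∈ Ioo A B) (hy : y ∈ Ioo A B)
    (h : T k x = T k y) : x = y :=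
  le_antisymm ((L.le_iff hx hy).1 h.le) ((L.le_iff hy hx).1 h.ge)

theorem exists_fixed (k : K) : ∃ x, x ∈ Ioo A B ∧ T k x = x := by
  by_cases hk : k = 1
  · obtain ⟨x, hx⟩ := L.nonempty
    exact ⟨x, hx, by rw [hk]; exact L.one x hx⟩
  · obtain ⟨x, hx, -⟩ := L.uniq k hk
    exact ⟨x, hx⟩

/-- The fixed point of `k` (the unique one if `k ≠ 1`). -/
def fx (k : K) : ℝ := (L.exists_fixed k).choose

theorem fx_mem (k : K) : L.fx k ∈ Ioo A B := (L.exists_fixed k).choose_spec.1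

theorem fx_fixed (k : K) : T k (L.fx k) = L.fx k := (L.exists_fixed k).choose_spec.2

theorem eq_fx {k : K} (hk : k ≠ 1) {x : ℝ} (hx : x ∈ Ioo A B) (h : T k x = x) :
    x = L.fx k := by
  obtain ⟨y, hy, hu⟩ := L.uniq k hk
  rw [hu x ⟨hx, h⟩, hu (L.fx k) ⟨L.fx_mem k, L.fx_fixed k⟩]

theorem fx_inv {k : K} (hk : k ≠ 1) : L.fx k⁻¹ = L.fx k := by
  have h1 : k⁻¹ ≠ 1 := by simpa using hk
  have : T k⁻¹ (L.fx k) = L.fx k := by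
    conv_lhs => rw [← L.fx_fixed k]
    exact L.inv_apply (L.fx_mem k)
  exact (L.eq_fx h1 (L.fx_mem k) this).symm

theorem pow_apply (k : K) (n : ℕ) {x : ℝ} (hx : x ∈ Ioo A B) :
    T (k ^ (n + 1)) x = T k (T (k ^ n) x) := by
  rw [pow_succ' k n]; exact L.mul k (k ^ n) x hx

theorem pow_fixed {k : K} {x : ℝ} (hx : x ∈ Ioo A B) (h : T k x = x) (n : ℕ) :
    T (k ^ n) x = x := by
  induction n with
  | zero => simpa using L.one x hx
  | succ n ih => rw [L.pow_apply k n hx, ih, h]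

end Basic

section Signs

/-- positive above the fixed point -/
def PA (k : K) : Prop := ∀ x ∈ Ioo A B, L.fx k < x → x < T k x
/-- negative above the fixed point -/
def NA (k : K) : Prop := ∀ x ∈ Ioo A B, L.fx k < x → T k x < x
/-- positive below the fixed point -/
def PB (k : K) : Prop := ∀ x ∈ Ioo A B, x < L.fx k → x < T k x
/-- negative below the fixed point -/
def NB (k : K) : Prop := ∀ x ∈ Ioo A B, x < L.fx k → T k x < x

theorem sign_const' {k : K} {x y : ℝ} (hx : x ∈ Ioo A B) (hy : y ∈ Ioo A B)
    (hne : ∀ z, min x y ≤ z → z ≤ max x y → T k z ≠ z) (h : x < T k x) : y < T k y := by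
  by_contra hle
  push_neg at hle
  have hyy : T k y < y := lt_of_le_of_ne hle (hne y (min_le_right x y) (le_max_right x y))
  have hsub : Icc (min x y) (max x y) ⊆ Ioo A B := fun z hz =>
    ⟨lt_of_lt_of_le (lt_min hx.1 hy.1) hz.1, lt_of_le_of_lt hz.2 (max_lt hx.2 hy.2)⟩
  have hcont : ContinuousOn (fun z => T k z - z) (Icc (min x y) (max x y)) :=
    ((L.cont k).mono hsub).sub continuousOn_id
  rcases le_total x y with hxy | hxy
  · rw [min_eq_left hxy, max_eq_right hxy] at hne hsub hcont
    have := intermediate_value_Icc' hxy hcont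
    have h0 : (0 : ℝ) ∈ Icc (T k y - y) (T k x - x) := ⟨by linarith, by linarith⟩
    obtain ⟨z, hz, hz0⟩ := this h0
    exact hne z (by simpa [min_eq_left hxy] using hz.1) (by simpa [max_eq_right hxy] using hz.2)
      (sub_eq_zero.1 (by simpa using hz0))
  · rw [min_eq_right hxy, max_eq_left hxy] at hne hsub hcont
    have := intermediate_value_Icc hxy hcont
    have h0 : (0 : ℝ) ∈ Icc (T k y - y) (T k x - x) := ⟨by linarith, by linarith⟩
    obtain ⟨z, hz, hz0⟩ := this h0
    exact hne z (by simpa [min_eq_right hxy] using hz.1) (by simpa [max_eq_left hxy] using hz.2)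
      (sub_eq_zero.1 (by simpa using hz0))

theorem ne_of_ne_fx {k : K} (hk : k ≠ 1) {z : ℝ} (hz : z ∈ Ioo A B)
    (h : z ≠ L.fx k) : T k z ≠ z := fun he => h (L.eq_fx hk hz he)

theorem pa_or_na {k : K} (hk : k ≠ 1) : L.PA k ∨ L.NA k := by
  obtain ⟨x₀, hx₀f, hx₀B⟩ := exists_between (L.fx_mem k).2
  have hx₀ : x₀ ∈ Ioo A B := ⟨lt_trans (L.fx_mem k).1 hx₀f, hx₀B⟩
  have hne : T k x₀ ≠ x₀ := L.ne_of_ne_fx hk hx₀ (ne_of_gt hx₀f)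
  rcases lt_or_gt_of_ne hne with hlt | hgt
  · right
    intro y hy hfy
    by_contra hc
    push_neg at hc
    have hy' : y < T k y :=
      lt_of_le_of_ne hc (Ne.symm (L.ne_of_ne_fx hk hy (ne_of_gt hfy)))
    have := L.sign_const' hy hx₀ (fun z h1 h2 he => L.ne_of_ne_fx hk
      ⟨lt_of_lt_of_le (lt_min hy.1 hx₀.1) h1, lt_of_le_of_lt h2 (max_lt hy.2 hx₀.2)⟩
      (ne_of_gt (lt_of_lt_of_le (lt_min hfy hx₀f) h1)) he) hy'
    exact absurd this (not_lt.2 hlt.le)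
  · left
    intro y hy hfy
    exact L.sign_const' hx₀ hy (fun z h1 h2 he => L.ne_of_ne_fx hk
      ⟨lt_of_lt_of_le (lt_min hx₀.1 hy.1) h1, lt_of_le_of_lt h2 (max_lt hx₀.2 hy.2)⟩
      (ne_of_gt (lt_of_lt_of_le (lt_min hx₀f hfy) h1)) he) hgt

theorem pb_or_nb {k : K} (hk : k ≠ 1) : L.PB k ∨ L.NB k := by
  obtain ⟨x₀, hx₀A, hx₀f⟩ := exists_between (L.fx_mem k).1
  have hx₀ : x₀ ∈ Ioo A B := ⟨hx₀A, lt_trans hx₀f (L.fx_mem k).2⟩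
  have hne : T k x₀ ≠ x₀ := L.ne_of_ne_fx hk hx₀ (ne_of_lt hx₀f)
  rcases lt_or_gt_of_ne hne with hlt | hgt
  · right
    intro y hy hfy
    by_contra hc
    push_neg at hc
    have hy' : y < T k y :=
      lt_of_le_of_ne hc (Ne.symm (L.ne_of_ne_fx hk hy (ne_of_lt hfy)))
    have := L.sign_const' hy hx₀ (fun z h1 h2 he => L.ne_of_ne_fx hk
      ⟨lt_of_lt_of_le (lt_min hy.1 hx₀.1) h1, lt_of_le_of_lt h2 (max_lt hy.2 hx₀.2)⟩
      (ne_of_lt (lt_of_le_of_lt h2 (max_lt hfy hx₀f))) he) hy'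
    exact absurd this (not_lt.2 hlt.le)
  · left
    intro y hy hfy
    exact L.sign_const' hx₀ hy (fun z h1 h2 he => L.ne_of_ne_fx hk
      ⟨lt_of_lt_of_le (lt_min hx₀.1 hy.1) h1, lt_of_le_of_lt h2 (max_lt hx₀.2 hy.2)⟩
      (ne_of_lt (lt_of_le_of_lt h2 (max_lt hx₀f hfy))) he) hgt

theorem pa_inv {k : K} (hk : k ≠ 1) (h : L.NA k) : L.PA k⁻¹ := by
  intro x hx hfx
  rw [L.fx_inv hk] at hfx
  set w := T k⁻¹ x with hw
  have hwJ : w ∈ Ioo A B := L.mapsTo k⁻¹ x hx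
  have hkw : T k w = x := L.apply_inv hx
  have hwf : L.fx k < w := by
    rw [← hkw] at hfx
    have := (L.lt_iff (L.fx_mem k) hwJ (k := k)).1 (by rw [L.fx_fixed k]; exact hfx)
    exact this
  have := h w hwJ hwf
  rw [hkw] at this
  exact this

theorem na_inv {k : K} (hk : k ≠ 1) (h : L.PA k) : L.NA k⁻¹ := by
  intro x hx hfx
  rw [L.fx_inv hk] at hfx
  set w := T k⁻¹ x with hw
  have hwJ : w ∈ Ioo A B := L.mapsTo k⁻¹ x hx
  have hkw : T k w = x := L.apply_inv hx
  have hwf : L.fx k < w := by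
    rw [← hkw] at hfx
    exact (L.lt_iff (L.fx_mem k) hwJ (k := k)).1 (by rw [L.fx_fixed k]; exact hfx)
  have := h w hwJ hwf
  rw [hkw] at this
  exact this

theorem pb_inv {k : K} (hk : k ≠ 1) (h : L.NB k) : L.PB k⁻¹ := by
  intro x hx hfx
  rw [L.fx_inv hk] at hfx
  set w := T k⁻¹ x with hw
  have hwJ : w ∈ Ioo A B := L.mapsTo k⁻¹ x hx
  have hkw : T k w = x := L.apply_inv hx
  have hwf : w < L.fx k := by
    rw [← hkw] at hfx
    exact (L.lt_iff hwJ (L.fx_mem k) (k := k)).1 (by rw [L.fx_fixed k]; exact hfx)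
  have := h w hwJ hwf
  rw [hkw] at this
  exact this

theorem nb_inv {k : K} (hk : k ≠ 1) (h : L.PB k) : L.NB k⁻¹ := by
  intro x hx hfx
  rw [L.fx_inv hk] at hfx
  set w := T k⁻¹ x with hw
  have hwJ : w ∈ Ioo A B := L.mapsTo k⁻¹ x hx
  have hkw : T k w = x := L.apply_inv hx
  have hwf : w < L.fx k := by
    rw [← hkw] at hfx
    exact (L.lt_iff hwJ (L.fx_mem k) (k := k)).1 (by rw [L.fx_fixed k]; exact hfx)
  have := h w hwJ hwf
  rw [hkw] at this
  exact this

end Signs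

section Crossing

theorem conj_apply (k l : K) {x : ℝ} (hx : x ∈ Ioo A B) :
    T (l * k * l⁻¹) x = T l (T k (T l⁻¹ x)) := by
  rw [L.mul (l * k) l⁻¹ x hx, L.mul l k _ (L.mapsTo l⁻¹ x hx)]

omit L in
theorem conj_ne_one {k l : K} (hk : k ≠ 1) : l * k * l⁻¹ ≠ 1 := fun h => hk (by
  have := congrArg (fun z => l⁻¹ * z * l) h
  simpa [mul_assoc] using this)

theorem fx_conj {k : K} (hk : k ≠ 1) (l : K) : L.fx (l * k * l⁻¹) = T l (L.fx k) := by
  have h1 : l * k * l⁻¹ ≠ 1 := conj_ne_one hk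
  have hm : T l (L.fx k) ∈ Ioo A B := L.mapsTo l _ (L.fx_mem k)
  have : T (l * k * l⁻¹) (T l (L.fx k)) = T l (L.fx k) := by
    rw [L.conj_apply k l hm, L.inv_apply (L.fx_mem k), L.fx_fixed k]
  exact (L.eq_fx h1 hm this).symm

theorem not_pa_pb (hng : ¬ ∃ x ∈ Ioo A B, ∀ k : K, T k x = x)
    {k : K} (hk : k ≠ 1) (h1 : L.PA k) (h2 : L.PB k) : False := by
  push_neg at hng
  obtain ⟨l, hl⟩ := hng (L.fx k) (L.fx_mem k)
  have hge : ∀ x ∈ Ioo A B, x ≤ T k x := by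
    intro x hx
    rcases lt_trichotomy x (L.fx k) with h | h | h
    · exact (h2 x hx h).le
    · rw [h, L.fx_fixed k]
    · exact (h1 x hx h).le
  set k' := l * k * l⁻¹ with hk'def
  have hk'1 : k' ≠ 1 := conj_ne_one hk
  have hfxk' : L.fx k' = T l (L.fx k) := L.fx_conj hk l
  have hd' : L.fx k' ≠ L.fx k := by rw [hfxk']; exact hl
  have hge' : ∀ x ∈ Ioo A B, x ≤ T k' x := by
    intro x hx
    have hw : T l⁻¹ x ∈ Ioo A B := L.mapsTo l⁻¹ x hx
    have := hge _ hw
    have h2' := (L.le_iff hw (L.mapsTo k _ hw) (k := l)).2 this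
    rw [L.apply_inv hx] at h2'
    rw [L.conj_apply k l hx]
    exact h2'
  have hm : ∀ x ∈ Ioo A B, x < T (k * k') x := by
    intro x hx
    have hk'x : T k' x ∈ Ioo A B := L.mapsTo k' x hx
    have e1 : x ≤ T k' x := hge' x hx
    have e2 : T k' x ≤ T k (T k' x) := hge _ hk'x
    rw [L.mul k k' x hx]
    rcases eq_or_lt_of_le (le_trans e1 e2) with he | he
    · exfalso
      have hq : T k' x = x := le_antisymm (by rw [← he] at e2; exact e2) e1
      have hq2 : T k x = x := by rw [hq] at he; exact he.symm
      have := (L.eq_fx hk'1 hx hq).symm.trans (L.eq_fx hk hx hq2)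
      exact hd' this
    · exact he
  rcases eq_or_ne (k * k') 1 with h | h
  · obtain ⟨x, hx⟩ := L.nonempty
    have := hm x hx
    rw [h, L.one x hx] at this
    exact lt_irrefl x this
  · obtain ⟨x, ⟨hx, hfix⟩, -⟩ := L.uniq _ h
    exact absurd hfix (ne_of_gt (hm x hx))

/-- `k` is an expanding element: repelling fixed point. -/
def Expa (k : K) : Prop := k ≠ 1 ∧ L.PA k ∧ L.NB k

theorem Expa.ne_one {k : K} (h : L.Expa k) : k ≠ 1 := h.1

theorem expa_or (hng : ¬ ∃ x ∈ Ioo A B, ∀ k : K, T k x = x)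
    {k : K} (hk : k ≠ 1) : L.Expa k ∨ L.Expa k⁻¹ := by
  have hk1 : k⁻¹ ≠ 1 := inv_ne_one.2 hk
  rcases L.pa_or_na hk with ha | ha
  · rcases L.pb_or_nb hk with hb | hb
    · exact (L.not_pa_pb hng hk ha hb).elim
    · exact Or.inl ⟨hk, ha, hb⟩
  · rcases L.pb_or_nb hk with hb | hb
    · exact Or.inr ⟨hk1, L.pa_inv hk ha, L.nb_inv hk hb⟩
    · exact (L.not_pa_pb hng hk1 (L.pa_inv hk ha) (L.pb_inv hk hb)).elim

theorem not_expa_inv {k : K} (h : L.Expa k) : ¬ L.Expa k⁻¹ := by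
  intro h'
  obtain ⟨x₀, hf, hB⟩ := exists_between (L.fx_mem k).2
  have hx₀ : x₀ ∈ Ioo A B := ⟨lt_trans (L.fx_mem k).1 hf, hB⟩
  have e1 : x₀ < T k x₀ := h.2.1 x₀ hx₀ hf
  have e2 : x₀ < T k⁻¹ x₀ := h'.2.1 x₀ hx₀ (by rw [L.fx_inv h.1]; exact hf)
  have := (L.lt_iff hx₀ (L.mapsTo k x₀ hx₀) (k := k⁻¹)).2 e1
  rw [L.inv_apply hx₀] at this
  exact lt_asymm e2 this

theorem na_of_expa_inv {k : K} (h : L.Expa k⁻¹) : L.NA k := by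
  have := L.na_inv h.1 h.2.1
  rwa [inv_inv] at this

theorem pb_of_expa_inv {k : K} (h : L.Expa k⁻¹) : L.PB k := by
  have := L.pb_inv h.1 h.2.2
  rwa [inv_inv] at this

theorem expa_inv_of_na_pb {k : K} (hk : k ≠ 1) (ha : L.NA k) (hb : L.PB k) :
    L.Expa k⁻¹ := ⟨inv_ne_one.2 hk, L.pa_inv hk ha, L.nb_inv hk hb⟩

theorem Expa.mul (hng : ¬ ∃ x ∈ Ioo A B, ∀ k : K, T k x = x)
    {a b : K} (ha : L.Expa a) (hb : L.Expa b) : L.Expa (a * b) := by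
  have hab : a * b ≠ 1 := by
    intro h
    have hba : a = b⁻¹ := eq_inv_of_mul_eq_one_left h
    exact L.not_expa_inv hb (hba ▸ ha)
  rcases L.expa_or hng hab with h | h
  · exact h
  · exfalso
    have hna : L.NA (a * b) := L.na_of_expa_inv h
    have hM : max (max (L.fx a) (L.fx b)) (L.fx (a * b)) < B :=
      max_lt (max_lt (L.fx_mem a).2 (L.fx_mem b).2) (L.fx_mem (a * b)).2
    obtain ⟨x, hMx, hxB⟩ := exists_between hM
    have hx : x ∈ Ioo A B :=
      ⟨lt_trans (lt_of_lt_of_le (L.fx_mem (a * b)).1 (le_max_right _ _)) hMx, hxB⟩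
    have hfa : L.fx a < x := lt_of_le_of_lt (le_trans (le_max_left _ _) (le_max_left _ _)) hMx
    have hfb : L.fx b < x := lt_of_le_of_lt (le_trans (le_max_right _ _) (le_max_left _ _)) hMx
    have hfab : L.fx (a * b) < x := lt_of_le_of_lt (le_max_right _ _) hMx
    have e1 : x < T b x := hb.2.1 x hx hfb
    have hbx : T b x ∈ Ioo A B := L.mapsTo b x hx
    have e2 : T b x < T a (T b x) := ha.2.1 _ hbx (lt_trans hfa e1)
    have e3 : T (a * b) x < x := hna x hx hfab
    rw [L.mul a b x hx] at e3
    linarith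

theorem Expa.conj (hng : ¬ ∃ x ∈ Ioo A B, ∀ k : K, T k x = x)
    {a : K} (ha : L.Expa a) (l : K) : L.Expa (l * a * l⁻¹) := by
  have h1 : l * a * l⁻¹ ≠ 1 := conj_ne_one ha.1
  rcases L.expa_or hng h1 with h | h
  · exact h
  · exfalso
    have hna : L.NA (l * a * l⁻¹) := L.na_of_expa_inv h
    have hfx : L.fx (l * a * l⁻¹) = T l (L.fx a) := L.fx_conj ha.1 l
    obtain ⟨x, hf, hB⟩ := exists_between (L.fx_mem (l * a * l⁻¹)).2
    have hx : x ∈ Ioo A B := ⟨lt_trans (L.fx_mem (l * a * l⁻¹)).1 hf, hB⟩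
    have hw : T l⁻¹ x ∈ Ioo A B := L.mapsTo l⁻¹ x hx
    have hwf : L.fx a < T l⁻¹ x := by
      have : T l⁻¹ (L.fx (l * a * l⁻¹)) < T l⁻¹ x :=
        L.mono l⁻¹ (L.fx_mem _) hx hf
      rwa [hfx, L.inv_apply (L.fx_mem a)] at this
    have e1 : T l⁻¹ x < T a (T l⁻¹ x) := ha.2.1 _ hw hwf
    have e2 : x < T l (T a (T l⁻¹ x)) := by
      have := L.mono l hw (L.mapsTo a _ hw) e1
      rwa [L.apply_inv hx] at this
    have e3 : T (l * a * l⁻¹) x < x := hna x hx hf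
    rw [L.conj_apply a l hx] at e3
    linarith

end Crossing

section Escape

theorem escape_up {u : K} (hu : L.Expa u) {x₀ : ℝ} (hx₀ : x₀ ∈ Ioo A B)
    (hfx : L.fx u < x₀) {y : ℝ} (hy : y ∈ Ioo A B) : ∃ n : ℕ, y < T (u ^ n) x₀ := by
  by_contra hc
  push_neg at hc
  set a : ℕ → ℝ := fun n => T (u ^ n) x₀ with ha
  have a0 : a 0 = x₀ := by
    show T (u ^ 0) x₀ = x₀
    rw [pow_zero]; exact L.one x₀ hx₀
  have hstep : ∀ n, a (n + 1) = T u (a n) := fun n => L.pow_apply u n hx₀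
  have hmem : ∀ n, a n ∈ Ioo A B := fun n => L.mapsTo _ x₀ hx₀
  have hgt : ∀ n, L.fx u < a n := by
    intro n; induction n with
    | zero => rw [a0]; exact hfx
    | succ n ih => rw [hstep n]; exact lt_trans ih (hu.2.1 _ (hmem n) ih)
  have hmono : Monotone a := monotone_nat_of_le_succ
    (fun n => by rw [hstep n]; exact (hu.2.1 _ (hmem n) (hgt n)).le)
  have hbdd : BddAbove (Set.range a) := ⟨y, by rintro _ ⟨n, rfl⟩; exact hc n⟩
  set s := ⨆ n, a n with hs
  have htend : Filter.Tendsto a Filter.atTop (nhds s) := tendsto_atTop_ciSup hmono hbdd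
  have hsy : s ≤ y := ciSup_le hc
  have hs0 : x₀ ≤ s := by rw [← a0]; exact le_ciSup hbdd 0
  have hsJ : s ∈ Ioo A B := ⟨lt_of_lt_of_le hx₀.1 hs0, lt_of_le_of_lt hsy hy.2⟩
  have hcont : ContinuousAt (T u) s := (L.cont u).continuousAt (Ioo_mem_nhds hsJ.1 hsJ.2)
  have h2 : Filter.Tendsto (fun n => T u (a n)) Filter.atTop (nhds (T u s)) :=
    hcont.tendsto.comp htend
  have h3 : Filter.Tendsto (fun n => a (n + 1)) Filter.atTop (nhds s) :=
    htend.comp (Filter.tendsto_add_atTop_nat 1)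
  have h4 : (fun n => T u (a n)) = fun n => a (n + 1) := funext fun n => (hstep n).symm
  have h5 : T u s = s := tendsto_nhds_unique (h4 ▸ h2) h3
  have h6 := L.eq_fx hu.1 hsJ h5
  have hlt : L.fx u < s := lt_of_lt_of_le hfx hs0
  rw [← h6] at hlt
  exact lt_irrefl _ hlt

theorem escape_down {u : K} (hu : L.Expa u) {x₀ : ℝ} (hx₀ : x₀ ∈ Ioo A B)
    (hfx : x₀ < L.fx u) {y : ℝ} (hy : y ∈ Ioo A B) : ∃ n : ℕ, T (u ^ n) x₀ < y := by
  by_contra hc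
  push_neg at hc
  set a : ℕ → ℝ := fun n => T (u ^ n) x₀ with ha
  have a0 : a 0 = x₀ := by
    show T (u ^ 0) x₀ = x₀
    rw [pow_zero]; exact L.one x₀ hx₀
  have hstep : ∀ n, a (n + 1) = T u (a n) := fun n => L.pow_apply u n hx₀
  have hmem : ∀ n, a n ∈ Ioo A B := fun n => L.mapsTo _ x₀ hx₀
  have hgt : ∀ n, a n < L.fx u := by
    intro n; induction n with
    | zero => rw [a0]; exact hfx
    | succ n ih => rw [hstep n]; exact lt_trans (hu.2.2 _ (hmem n) ih) ih
  have hmono : Antitone a := antitone_nat_of_succ_le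
    (fun n => by rw [hstep n]; exact (hu.2.2 _ (hmem n) (hgt n)).le)
  have hbdd : BddBelow (Set.range a) := ⟨y, by rintro _ ⟨n, rfl⟩; exact hc n⟩
  set s := ⨅ n, a n with hs
  have htend : Filter.Tendsto a Filter.atTop (nhds s) := tendsto_atTop_ciInf hmono hbdd
  have hsy : y ≤ s := le_ciInf hc
  have hs0 : s ≤ x₀ := by rw [← a0]; exact ciInf_le hbdd 0
  have hsJ : s ∈ Ioo A B := ⟨lt_of_lt_of_le hy.1 hsy, lt_of_le_of_lt hs0 hx₀.2⟩
  have hcont : ContinuousAt (T u) s := (L.cont u).continuousAt (Ioo_mem_nhds hsJ.1 hsJ.2)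
  have h2 : Filter.Tendsto (fun n => T u (a n)) Filter.atTop (nhds (T u s)) :=
    hcont.tendsto.comp htend
  have h3 : Filter.Tendsto (fun n => a (n + 1)) Filter.atTop (nhds s) :=
    htend.comp (Filter.tendsto_add_atTop_nat 1)
  have h4 : (fun n => T u (a n)) = fun n => a (n + 1) := funext fun n => (hstep n).symm
  have h5 : T u s = s := tendsto_nhds_unique (h4 ▸ h2) h3
  have h6 := L.eq_fx hu.1 hsJ h5
  have hlt : s < L.fx u := lt_of_le_of_lt hs0 hfx
  rw [← h6] at hlt
  exact lt_irrefl _ hlt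

theorem lt_fx_of_con_pos {z : K} (hz : L.Expa z⁻¹) {x : ℝ} (hx : x ∈ Ioo A B)
    (h : x < T z x) : x < L.fx z := by
  rcases lt_trichotomy x (L.fx z) with h' | h' | h'
  · exact h'
  · exfalso
    rw [h'] at h
    rw [L.fx_fixed z] at h
    exact lt_irrefl _ h
  · exact absurd (L.na_of_expa_inv hz x hx h') (not_lt.2 h.le)

theorem fx_lt_of_con_neg {z : K} (hz : L.Expa z⁻¹) {x : ℝ} (hx : x ∈ Ioo A B)
    (h : T z x < x) : L.fx z < x := by
  rcases lt_trichotomy x (L.fx z) with h' | h' | h'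
  · exact absurd (L.pb_of_expa_inv hz x hx h') (not_lt.2 h.le)
  · exfalso
    rw [h'] at h
    rw [L.fx_fixed z] at h
    exact lt_irrefl _ h
  · exact h'

theorem arch (hng : ¬ ∃ x ∈ Ioo A B, ∀ k : K, T k x = x)
    {u v : K} (hu : L.Expa u) (hv : L.Expa v) :
    ∃ n : ℕ, 0 < n ∧ (v = u ^ n ∨ L.Expa (u ^ n * v⁻¹)) := by
  by_contra hc
  push_neg at hc
  have key : ∀ n : ℕ, 0 < n → L.Expa (v⁻¹ * u ^ n)⁻¹ := by
    intro n hn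
    obtain ⟨hne, hnexp⟩ := hc n hn
    have hz1 : v⁻¹ * u ^ n ≠ 1 := by
      intro h
      exact hne (inv_mul_eq_one.1 h)
    rcases L.expa_or hng hz1 with h | h
    · exfalso
      apply hnexp
      have := Expa.conj L hng h v
      have he : v * (v⁻¹ * u ^ n) * v⁻¹ = u ^ n * v⁻¹ := by group
      rwa [he] at this
    · exact h
  set c := L.fx u with hcdef
  set e := L.fx v with hedef
  have hTc : ∀ n : ℕ, T (u ^ n) c = c := fun n => L.pow_fixed (L.fx_mem u) (L.fx_fixed u) n
  rcases lt_trichotomy c e with hce | hce | hce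
  · -- c < e : pick x₀ < c, show T (u^n) x₀ > T v x₀ for all n > 0, contradict escape_down
    obtain ⟨x₀, hAx₀, hx₀c⟩ := exists_between (L.fx_mem u).1
    have hx₀ : x₀ ∈ Ioo A B := ⟨hAx₀, lt_trans hx₀c (L.fx_mem u).2⟩
    have hvx₀ : T v x₀ ∈ Ioo A B := L.mapsTo v x₀ hx₀
    obtain ⟨n, hesc⟩ := L.escape_down hu hx₀ hx₀c hvx₀
    have hn : 0 < n := by
      rcases Nat.eq_zero_or_pos n with h0 | h0
      · exfalso
        rw [h0, pow_zero, L.one x₀ hx₀] at hesc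
        have : T v x₀ < x₀ := hv.2.2 x₀ hx₀ (lt_trans hx₀c hce)
        linarith
      · exact h0
    have hzJ := key n hn
    set z := v⁻¹ * u ^ n with hzdef
    have hTz : ∀ x ∈ Ioo A B, T z x = T v⁻¹ (T (u ^ n) x) := fun x hx => L.mul v⁻¹ (u ^ n) x hx
    have hTzc : c < T z c := by
      rw [hTz c (L.fx_mem u), hTc n]
      have h1 : T v c < c := hv.2.2 c (L.fx_mem u) hce
      have := L.mono v⁻¹ (L.mapsTo v c (L.fx_mem u)) (L.fx_mem u) h1
      rwa [L.inv_apply (L.fx_mem u)] at this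
    have hcfz : c < L.fx z := L.lt_fx_of_con_pos hzJ (L.fx_mem u) hTzc
    have hgt : x₀ < T z x₀ := L.pb_of_expa_inv hzJ x₀ hx₀ (lt_trans hx₀c hcfz)
    rw [hTz x₀ hx₀] at hgt
    have := L.mono v hx₀ (L.mapsTo v⁻¹ _ (L.mapsTo _ x₀ hx₀)) hgt
    rw [L.apply_inv (L.mapsTo _ x₀ hx₀)] at this
    linarith
  · -- c = e : pick x₀ > c, T (u^n) x₀ < T v x₀ for all n > 0, contradict escape_up
    obtain ⟨x₀, hcx₀, hx₀B⟩ := exists_between (L.fx_mem u).2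
    have hx₀ : x₀ ∈ Ioo A B := ⟨lt_trans (L.fx_mem u).1 hcx₀, hx₀B⟩
    have hvx₀ : T v x₀ ∈ Ioo A B := L.mapsTo v x₀ hx₀
    obtain ⟨n, hesc⟩ := L.escape_up hu hx₀ hcx₀ hvx₀
    have hn : 0 < n := by
      rcases Nat.eq_zero_or_pos n with h0 | h0
      · exfalso
        rw [h0, pow_zero, L.one x₀ hx₀] at hesc
        have : x₀ < T v x₀ := hv.2.1 x₀ hx₀ (by
          have hfv : L.fx v = L.fx u := hce.symm
          rw [hfv]; exact hcx₀)
        linarith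
      · exact h0
    have hzJ := key n hn
    set z := v⁻¹ * u ^ n with hzdef
    have hTz : ∀ x ∈ Ioo A B, T z x = T v⁻¹ (T (u ^ n) x) := fun x hx => L.mul v⁻¹ (u ^ n) x hx
    have hTvc : T v c = c := by rw [hce]; exact L.fx_fixed v
    have hTzc : T z c = c := by
      rw [hTz c (L.fx_mem u), hTc n]
      conv_lhs => rw [← hTvc]
      exact L.inv_apply (L.fx_mem u)
    have hz1 : z ≠ 1 := by
      have := hzJ.1
      simpa using this
    have hfzc : L.fx z = c := (L.eq_fx hz1 (L.fx_mem u) hTzc).symm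
    have hlt : T z x₀ < x₀ := L.na_of_expa_inv hzJ x₀ hx₀ (by rw [hfzc]; exact hcx₀)
    rw [hTz x₀ hx₀] at hlt
    have := L.mono v (L.mapsTo v⁻¹ _ (L.mapsTo _ x₀ hx₀)) hx₀ hlt
    rw [L.apply_inv (L.mapsTo _ x₀ hx₀)] at this
    linarith
  · -- e < c : pick x₀ > c
    obtain ⟨x₀, hcx₀, hx₀B⟩ := exists_between (L.fx_mem u).2
    have hx₀ : x₀ ∈ Ioo A B := ⟨lt_trans (L.fx_mem u).1 hcx₀, hx₀B⟩
    have hvx₀ : T v x₀ ∈ Ioo A B := L.mapsTo v x₀ hx₀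
    obtain ⟨n, hesc⟩ := L.escape_up hu hx₀ hcx₀ hvx₀
    have hn : 0 < n := by
      rcases Nat.eq_zero_or_pos n with h0 | h0
      · exfalso
        rw [h0, pow_zero, L.one x₀ hx₀] at hesc
        have : x₀ < T v x₀ := hv.2.1 x₀ hx₀ (lt_trans hce hcx₀)
        linarith
      · exact h0
    have hzJ := key n hn
    set z := v⁻¹ * u ^ n with hzdef
    have hTz : ∀ x ∈ Ioo A B, T z x = T v⁻¹ (T (u ^ n) x) := fun x hx => L.mul v⁻¹ (u ^ n) x hx
    have hTzc : T z c < c := by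
      rw [hTz c (L.fx_mem u), hTc n]
      have h1 : c < T v c := hv.2.1 c (L.fx_mem u) hce
      have := L.mono v⁻¹ (L.fx_mem u) (L.mapsTo v c (L.fx_mem u)) h1
      rwa [L.inv_apply (L.fx_mem u)] at this
    have hcfz : L.fx z < c := L.fx_lt_of_con_neg hzJ (L.fx_mem u) hTzc
    have hlt : T z x₀ < x₀ := L.na_of_expa_inv hzJ x₀ hx₀ (lt_trans hcfz hcx₀)
    rw [hTz x₀ hx₀] at hlt
    have := L.mono v (L.mapsTo v⁻¹ _ (L.mapsTo _ x₀ hx₀)) hx₀ hlt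
    rw [L.apply_inv (L.mapsTo _ x₀ hx₀)] at this
    linarith

end Escape

section OrderAlg

/-- bi-invariant order coming from the expanding cone -/
def le' (a b : K) : Prop := a = b ∨ L.Expa (b * a⁻¹)

theorem le'_refl (a : K) : L.le' a a := Or.inl rfl

theorem expa_ne_one {a : K} (h : L.Expa a) : a ≠ 1 := h.1

theorem le'_antisymm {a b : K} (h1 : L.le' a b) (h2 : L.le' b a) : a = b := by
  rcases h1 with h1 | h1
  · exact h1
  · rcases h2 with h2 | h2
    · exact h2.symm
    · exfalso
      have : (b * a⁻¹)⁻¹ = a * b⁻¹ := by group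
      exact L.not_expa_inv h1 (by rw [this]; exact h2)

variable (hng : ¬ ∃ x ∈ Ioo A B, ∀ k : K, T k x = x)
include hng

theorem le'_trans {a b c : K} (h1 : L.le' a b) (h2 : L.le' b c) : L.le' a c := by
  rcases h1 with h1 | h1
  · rwa [h1]
  · rcases h2 with h2 | h2
    · rw [← h2]; exact Or.inr h1
    · right
      have := Expa.mul L hng h2 h1
      have he : c * b⁻¹ * (b * a⁻¹) = c * a⁻¹ := by group
      rwa [he] at this

theorem le'_total (a b : K) : L.le' a b ∨ L.le' b a := by
  rcases eq_or_ne a b with h | h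
  · exact Or.inl (Or.inl h)
  · have h1 : b * a⁻¹ ≠ 1 := by
      intro hc
      exact h (mul_inv_eq_one.1 hc).symm
    rcases L.expa_or hng h1 with h2 | h2
    · exact Or.inl (Or.inr h2)
    · right
      right
      have he : (b * a⁻¹)⁻¹ = a * b⁻¹ := by group
      rwa [he] at h2

theorem le'_mul_left {a b : K} (c : K) (h : L.le' a b) : L.le' (c * a) (c * b) := by
  rcases h with h | h
  · exact Or.inl (by rw [h])
  · right
    have := Expa.conj L hng h c
    have he : c * (b * a⁻¹) * c⁻¹ = c * b * (c * a)⁻¹ := by group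
    rwa [he] at this

omit hng in
theorem le'_mul_right {a b : K} (c : K) (h : L.le' a b) : L.le' (a * c) (b * c) := by
  rcases h with h | h
  · exact Or.inl (by rw [h])
  · right
    have he : b * a⁻¹ = b * c * (a * c)⁻¹ := by group
    rwa [he] at h

theorem le'_mul {a b c d : K} (h1 : L.le' a b) (h2 : L.le' c d) :
    L.le' (a * c) (b * d) :=
  L.le'_trans hng (L.le'_mul_left hng a h2) (L.le'_mul_right d h1)

theorem le'_inv {a b : K} (h : L.le' a b) : L.le' b⁻¹ a⁻¹ := by
  rcases h with h | h
  · exact Or.inl (by rw [h])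
  · right
    have := Expa.conj L hng h a⁻¹
    have he : a⁻¹ * (b * a⁻¹) * a⁻¹⁻¹ = a⁻¹ * (b⁻¹)⁻¹ := by group
    rwa [he] at this

theorem le'_pow {a b : K} (h : L.le' a b) (n : ℕ) : L.le' (a ^ n) (b ^ n) := by
  induction n with
  | zero => exact Or.inl (by simp)
  | succ n ih =>
    rw [pow_succ, pow_succ]
    exact L.le'_mul hng ih h

theorem expa_pow {u : K} (hu : L.Expa u) {n : ℕ} (hn : 0 < n) : L.Expa (u ^ n) := by
  induction n with
  | zero => exact absurd hn (lt_irrefl 0)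
  | succ n ih =>
    rcases Nat.eq_zero_or_pos n with h0 | h0
    · rw [h0, pow_one]; exact hu
    · rw [pow_succ]
      exact Expa.mul L hng (ih h0) hu

theorem lt'_mul {a b c d : K} (h1 : L.Expa (b * a⁻¹)) (h2 : L.Expa (d * c⁻¹)) :
    L.Expa (b * d * (a * c)⁻¹) := by
  have hconj := Expa.conj L hng h2 b
  have := Expa.mul L hng hconj h1
  have he : b * (d * c⁻¹) * b⁻¹ * (b * a⁻¹) = b * d * (a * c)⁻¹ := by group
  rwa [he] at this

theorem lt'_pow {a b : K} (h : L.Expa (b * a⁻¹)) {n : ℕ} (hn : 0 < n) :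
    L.Expa (b ^ n * (a ^ n)⁻¹) := by
  induction n with
  | zero => exact absurd hn (lt_irrefl 0)
  | succ n ih =>
    rcases Nat.eq_zero_or_pos n with h0 | h0
    · rw [h0, pow_one, pow_one]; exact h
    · rw [pow_succ, pow_succ]
      exact L.lt'_mul hng (ih h0) h

omit hng in
theorem not_le'_of_lt' {a b : K} (h : L.Expa (b * a⁻¹)) : ¬ L.le' b a := by
  intro hc
  rcases hc with hc | hc
  · rw [hc] at h
    simp at h
    exact h.1 rfl
  · have he : (b * a⁻¹)⁻¹ = a * b⁻¹ := by group
    exact L.not_expa_inv h (by rw [he]; exact hc)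

theorem le'_root {a b : K} {n : ℕ} (hn : 0 < n) (h : L.le' (a ^ n) (b ^ n)) :
    L.le' a b := by
  rcases L.le'_total hng a b with h1 | h1
  · exact h1
  · rcases eq_or_ne b a with h2 | h2
    · exact Or.inl h2.symm
    · exfalso
      have hlt : L.Expa (a * b⁻¹) := by
        rcases h1 with h1 | h1
        · exact absurd h1 h2
        · exact h1
      have := L.lt'_pow hng hlt hn
      exact L.not_le'_of_lt' this h

theorem expa_zpow_lt {m m' : ℤ} {u : K} (hu : L.Expa u) (h : m < m') :
    L.Expa (u ^ m' * (u ^ m)⁻¹) := by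
  have he : u ^ m' * (u ^ m)⁻¹ = u ^ (m' - m) := by
    rw [zpow_sub]
  rw [he]
  obtain ⟨d, hd, hd0⟩ : ∃ d : ℕ, (d : ℤ) = m' - m ∧ 0 < d :=
    ⟨(m' - m).toNat, by omega, by omega⟩
  rw [← hd, zpow_natCast]
  exact L.expa_pow hng hu hd0

theorem le'_zpow_le {m m' : ℤ} {u : K} (hu : L.Expa u) (h : m ≤ m') :
    L.le' (u ^ m) (u ^ m') := by
  rcases eq_or_lt_of_le h with h1 | h1
  · exact Or.inl (by rw [h1])
  · exact Or.inr (L.expa_zpow_lt hng hu h1)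

end OrderAlg

section Sandwich

variable (hng : ¬ ∃ x ∈ Ioo A B, ∀ k : K, T k x = x)
include hng

theorem comm_pow_le {a b : K} (h : L.le' (a * b) (b * a)) (n : ℕ) :
    L.le' (a * b ^ n) (b ^ n * a) := by
  induction n with
  | zero => exact Or.inl (by simp)
  | succ n ih =>
    have s1 : L.le' (a * b ^ n * b) (b ^ n * a * b) := L.le'_mul_right b ih
    have s2 : L.le' (b ^ n * (a * b)) (b ^ n * (b * a)) := L.le'_mul_left hng _ h
    have e1 : a * b ^ (n + 1) = a * b ^ n * b := by rw [pow_succ, mul_assoc]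
    have e3 : b ^ n * (b * a) = b ^ (n + 1) * a := by rw [pow_succ]; group
    rw [e1, ← e3]
    exact L.le'_trans hng s1 (by rw [mul_assoc] at s1 ⊢; rw [← mul_assoc]; exact (by rw [mul_assoc]; exact s2))

theorem sandwich_lower {a b : K} (h : L.le' (a * b) (b * a)) (n : ℕ) :
    L.le' (a ^ n * b ^ n) ((a * b) ^ n) := by
  induction n with
  | zero => exact Or.inl (by simp)
  | succ n ih =>
    have s1 : L.le' (a ^ n * b ^ n * (a * b)) ((a * b) ^ n * (a * b)) :=
      L.le'_mul_right (a * b) ih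
    have s2 : L.le' (a ^ n * (a * b ^ n) * b) (a ^ n * (b ^ n * a) * b) :=
      L.le'_mul_right b (L.le'_mul_left hng _ (L.comm_pow_le hng h n))
    have e1 : a ^ n * (a * b ^ n) * b = a ^ (n + 1) * b ^ (n + 1) := by
      rw [pow_succ, pow_succ]; group
    have e2 : a ^ n * (b ^ n * a) * b = a ^ n * b ^ n * (a * b) := by group
    have e3 : (a * b) ^ n * (a * b) = (a * b) ^ (n + 1) := by rw [pow_succ]
    rw [← e3]
    refine L.le'_trans hng ?_ s1
    rw [← e2]
    rw [← e1] at *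
    exact s2

theorem sandwich (a b : K) (n : ℕ) :
    L.le' (a ^ n * b ^ n) ((a * b) ^ n) ∨ L.le' (b ^ n * a ^ n) ((a * b) ^ n) := by
  rcases L.le'_total hng (a * b) (b * a) with h | h
  · exact Or.inl (L.sandwich_lower hng h n)
  · right
    have s1 : L.le' (b ^ n * a ^ n) ((b * a) ^ n) := L.sandwich_lower hng h n
    have s2 : L.le' ((b * a) ^ n) ((a * b) ^ n) := L.le'_pow hng h n
    exact L.le'_trans hng s1 s2

end Sandwich

section Cut

/-- the lower cut of slopes of `k` relative to `u₀` -/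
def S (u₀ k : K) : Set ℝ :=
  {x | ∃ (m : ℤ) (n : ℕ), 0 < n ∧ L.le' (u₀ ^ m) (k ^ n) ∧ x = (m : ℝ) / (n : ℝ)}

/-- the translation number of `k` relative to `u₀` -/
def phi (u₀ k : K) : ℝ := sSup (L.S u₀ k)

variable (hng : ¬ ∃ x ∈ Ioo A B, ∀ k : K, T k x = x) {u₀ : K}
include hng

theorem rep_mono (hu₀ : L.Expa u₀) {k : K} {m m' : ℤ} {n n' : ℕ} (hn : 0 < n) (hn' : 0 < n')
    (h : L.le' (u₀ ^ m) (k ^ n)) (hle : m' * (n : ℤ) ≤ m * (n' : ℤ)) :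
    L.le' (u₀ ^ m') (k ^ n') := by
  apply L.le'_root hng (n := n) hn
  have e1 : (u₀ ^ m') ^ n = u₀ ^ (m' * (n : ℤ)) := by
    rw [← zpow_natCast (u₀ ^ m') n, ← zpow_mul]
  have e2 : (u₀ ^ m) ^ n' = u₀ ^ (m * (n' : ℤ)) := by
    rw [← zpow_natCast (u₀ ^ m) n', ← zpow_mul]
  have e3 : (k ^ n) ^ n' = (k ^ n') ^ n := by rw [← pow_mul, mul_comm, pow_mul]
  rw [e1]
  have s1 : L.le' (u₀ ^ (m' * (n : ℤ))) (u₀ ^ (m * (n' : ℤ))) := L.le'_zpow_le hng hu₀ hle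
  have s2 : L.le' ((u₀ ^ m) ^ n') ((k ^ n) ^ n') := L.le'_pow hng h n'
  rw [e2, e3] at s2
  exact L.le'_trans hng s1 s2

theorem arch_ub (hu₀ : L.Expa u₀) (k : K) : ∃ N : ℕ, 0 < N ∧ L.le' k (u₀ ^ (N : ℤ)) := by
  by_cases hk : k = 1
  · refine ⟨1, one_pos, ?_⟩
    rw [hk]
    have he : u₀ ^ (((1 : ℕ) : ℤ)) = u₀ := by norm_num
    rw [he]
    exact Or.inr (by simpa using hu₀)
  rcases L.expa_or hng hk with h | h
  · obtain ⟨n, hn, harch⟩ := L.arch hng hu₀ h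
    refine ⟨n, hn, ?_⟩
    rw [zpow_natCast]
    exact harch.imp id id
  · refine ⟨1, one_pos, ?_⟩
    have h1 : L.le' k 1 := Or.inr (by simpa using h)
    have h2 : L.le' 1 (u₀ ^ (((1 : ℕ) : ℤ))) := by
      have he : u₀ ^ (((1 : ℕ) : ℤ)) = u₀ := by norm_num
      rw [he]
      exact Or.inr (by simpa using hu₀)
    exact L.le'_trans hng h1 h2

theorem arch_lb (hu₀ : L.Expa u₀) (k : K) :
    ∃ N : ℕ, 0 < N ∧ L.le' (u₀ ^ (-(N : ℤ))) k := by
  obtain ⟨N, hN, h⟩ := L.arch_ub hng hu₀ k⁻¹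
  refine ⟨N, hN, ?_⟩
  have := L.le'_inv hng h
  rwa [inv_inv, ← zpow_neg] at this

theorem S_nonempty (hu₀ : L.Expa u₀) (k : K) : (L.S u₀ k).Nonempty := by
  obtain ⟨N, hN, h⟩ := L.arch_lb hng hu₀ k
  exact ⟨(-(N : ℤ) : ℤ) / (1 : ℕ), -(N : ℤ), 1, one_pos, by rwa [pow_one], by norm_num⟩

theorem S_bddAbove (hu₀ : L.Expa u₀) (k : K) : BddAbove (L.S u₀ k) := by
  obtain ⟨N, hN, h⟩ := L.arch_ub hng hu₀ k
  refine ⟨(N : ℝ), ?_⟩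
  rintro x ⟨m, n, hn, hle, rfl⟩
  have hmn : m ≤ (N : ℤ) * n := by
    by_contra hc
    push_neg at hc
    have s1 : L.le' (k ^ n) ((u₀ ^ (N : ℤ)) ^ n) := L.le'_pow hng h n
    have e1 : (u₀ ^ (N : ℤ)) ^ n = u₀ ^ ((N : ℤ) * n) := by
      rw [← zpow_natCast (u₀ ^ (N : ℤ)) n, ← zpow_mul]
    rw [e1] at s1
    have s2 := L.le'_trans hng hle s1
    have s3 := L.expa_zpow_lt hng hu₀ hc
    exact L.not_le'_of_lt' s3 s2
  have hn' : (0 : ℝ) < (n : ℝ) := by exact_mod_cast hn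
  rw [div_le_iff₀ hn']
  exact_mod_cast hmn

theorem phi_ge (hu₀ : L.Expa u₀) {k : K} {m : ℤ} {n : ℕ} (hn : 0 < n)
    (h : L.le' (u₀ ^ m) (k ^ n)) : (m : ℝ) / (n : ℝ) ≤ L.phi u₀ k :=
  le_csSup (L.S_bddAbove hng hu₀ k) ⟨m, n, hn, h, rfl⟩

theorem phi_le (hu₀ : L.Expa u₀) {k : K} {m : ℤ} {n : ℕ} (hn : 0 < n)
    (h : ¬ L.le' (u₀ ^ m) (k ^ n)) : L.phi u₀ k ≤ (m : ℝ) / (n : ℝ) := by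
  apply csSup_le (L.S_nonempty hng hu₀ k)
  rintro x ⟨m', n', hn', hle', rfl⟩
  by_contra hc
  push_neg at hc
  have hnn : (0 : ℝ) < (n : ℝ) := by exact_mod_cast hn
  have hnn' : (0 : ℝ) < (n' : ℝ) := by exact_mod_cast hn'
  rw [div_lt_div_iff₀ hnn hnn'] at hc
  have hle2 : m * (n' : ℤ) ≤ m' * (n : ℤ) := by exact_mod_cast (le_of_lt hc)
  exact h (L.rep_mono hng hu₀ hn' hn hle' hle2)

theorem mem_S_mul (hu₀ : L.Expa u₀) {a b : K} {x y : ℝ}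
    (hx : x ∈ L.S u₀ a) (hy : y ∈ L.S u₀ b) : x + y ∈ L.S u₀ (a * b) := by
  obtain ⟨m₁, n₁, hn₁, h₁, rfl⟩ := hx
  obtain ⟨m₂, n₂, hn₂, h₂, rfl⟩ := hy
  have hN0 : 0 < n₁ * n₂ := Nat.mul_pos hn₁ hn₂
  have c₁ : L.le' (u₀ ^ (m₁ * (n₂ : ℤ))) (a ^ (n₁ * n₂)) :=
    L.rep_mono hng hu₀ hn₁ hN0 h₁ (le_of_eq (by push_cast; ring))
  have c₂ : L.le' (u₀ ^ (m₂ * (n₁ : ℤ))) (b ^ (n₁ * n₂)) :=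
    L.rep_mono hng hu₀ hn₂ hN0 h₂ (le_of_eq (by push_cast; ring))
  have key : L.le' (u₀ ^ (m₁ * (n₂ : ℤ) + m₂ * (n₁ : ℤ))) ((a * b) ^ (n₁ * n₂)) := by
    rcases L.sandwich hng a b (n₁ * n₂) with hs | hs
    · have hc : L.le' (u₀ ^ (m₁ * (n₂ : ℤ)) * u₀ ^ (m₂ * (n₁ : ℤ)))
          (a ^ (n₁ * n₂) * b ^ (n₁ * n₂)) := L.le'_mul hng c₁ c₂
      rw [← zpow_add] at hc
      exact L.le'_trans hng hc hs
    · have hc : L.le' (u₀ ^ (m₂ * (n₁ : ℤ)) * u₀ ^ (m₁ * (n₂ : ℤ)))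
          (b ^ (n₁ * n₂) * a ^ (n₁ * n₂)) := L.le'_mul hng c₂ c₁
      rw [← zpow_add, add_comm (m₂ * (n₁ : ℤ)) (m₁ * (n₂ : ℤ))] at hc
      exact L.le'_trans hng hc hs
  refine ⟨m₁ * (n₂ : ℤ) + m₂ * (n₁ : ℤ), n₁ * n₂, hN0, key, ?_⟩
  have e₁ : ((n₁ : ℝ)) ≠ 0 := by exact_mod_cast hn₁.ne'
  have e₂ : ((n₂ : ℝ)) ≠ 0 := by exact_mod_cast hn₂.ne'
  push_cast
  field_simp
  try ring

theorem phi_superadd (hu₀ : L.Expa u₀) (a b : K) :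
    L.phi u₀ a + L.phi u₀ b ≤ L.phi u₀ (a * b) := by
  have h1 : ∀ x ∈ L.S u₀ a, ∀ y ∈ L.S u₀ b, x + y ≤ L.phi u₀ (a * b) := fun x hx y hy =>
    le_csSup (L.S_bddAbove hng hu₀ (a * b)) (L.mem_S_mul hng hu₀ hx hy)
  have h2 : ∀ x ∈ L.S u₀ a, x ≤ L.phi u₀ (a * b) - L.phi u₀ b := by
    intro x hx
    have h3 : L.phi u₀ b ≤ L.phi u₀ (a * b) - x :=
      csSup_le (L.S_nonempty hng hu₀ b) (fun y hy => by
        have := h1 x hx y hy; linarith)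
    linarith
  have h4 : L.phi u₀ a ≤ L.phi u₀ (a * b) - L.phi u₀ b :=
    csSup_le (L.S_nonempty hng hu₀ a) h2
  linarith

theorem phi_one (hu₀ : L.Expa u₀) : L.phi u₀ (1 : K) = 0 := by
  apply le_antisymm
  · apply csSup_le (L.S_nonempty hng hu₀ 1)
    rintro x ⟨m, n, hn, hle, rfl⟩
    rw [one_pow] at hle
    have hm0 : m ≤ 0 := by
      by_contra hc
      push_neg at hc
      have : L.Expa (u₀ ^ m * (1 : K)⁻¹) := by
        have := L.expa_zpow_lt hng hu₀ hc
        simpa using this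
      exact L.not_le'_of_lt' (a := 1) (b := u₀ ^ m) (by simpa using this) hle
    have hnn : (0 : ℝ) < (n : ℝ) := by exact_mod_cast hn
    have hm' : (m : ℝ) ≤ 0 := by exact_mod_cast hm0
    rw [div_nonpos_iff]
    right
    exact ⟨hm', hnn.le⟩
  · have : ((0 : ℤ) : ℝ) / ((1 : ℕ) : ℝ) ≤ L.phi u₀ 1 := by
      apply L.phi_ge hng hu₀ one_pos
      rw [zpow_zero, one_pow]
      exact L.le'_refl 1
    simpa using this

theorem phi_inv (hu₀ : L.Expa u₀) (k : K) : L.phi u₀ k⁻¹ = - L.phi u₀ k := by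
  have hle : L.phi u₀ k + L.phi u₀ k⁻¹ ≤ 0 := by
    have := L.phi_superadd hng hu₀ k k⁻¹
    rw [mul_inv_cancel, L.phi_one hng hu₀] at this
    exact this
  have hge : - L.phi u₀ k ≤ L.phi u₀ k⁻¹ := by
    by_contra hc
    push_neg at hc
    obtain ⟨q, hq1, hq2⟩ := exists_rat_btwn hc
    have hqden : 0 < q.den := q.pos
    have hqre : (q : ℝ) = ((q.num : ℝ)) / ((q.den : ℝ)) := by
      rw [Rat.cast_def]
    have hnot : ¬ L.le' (u₀ ^ q.num) ((k⁻¹) ^ q.den) := by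
      intro hcon
      have := L.phi_ge hng hu₀ hqden hcon
      rw [← hqre] at this
      linarith
    have htot : L.le' ((k⁻¹) ^ q.den) (u₀ ^ q.num) := by
      rcases L.le'_total hng ((k⁻¹) ^ q.den) (u₀ ^ q.num) with h | h
      · exact h
      · exact absurd h hnot
    have hinv := L.le'_inv hng htot
    rw [inv_pow, inv_inv, ← zpow_neg] at hinv
    have := L.phi_ge hng hu₀ hqden hinv
    have hcast : ((-q.num : ℤ) : ℝ) / ((q.den : ℝ)) = - (q : ℝ) := by
      push_cast
      rw [hqre]
      ring
    rw [hcast] at this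
    linarith
  linarith

theorem phi_hom (hu₀ : L.Expa u₀) (a b : K) :
    L.phi u₀ (a * b) = L.phi u₀ a + L.phi u₀ b := by
  have h1 := L.phi_superadd hng hu₀ a b
  have h2 := L.phi_superadd hng hu₀ (a * b) b⁻¹
  rw [mul_assoc, mul_inv_cancel, mul_one, L.phi_inv hng hu₀ b] at h2
  linarith

theorem phi_pos (hu₀ : L.Expa u₀) {k : K} (hk : L.Expa k) : 0 < L.phi u₀ k := by
  obtain ⟨n, hn, harch⟩ := L.arch hng hk hu₀
  have hle : L.le' (u₀ ^ (1 : ℤ)) (k ^ n) := by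
    rw [zpow_one]
    exact harch.imp id id
  have := L.phi_ge hng hu₀ hn hle
  have hnn : (0 : ℝ) < (n : ℝ) := by exact_mod_cast hn
  have : (0 : ℝ) < ((1 : ℤ) : ℝ) / (n : ℝ) := by positivity
  linarith [L.phi_ge hng hu₀ hn hle]

theorem abelian (hu₀ : L.Expa u₀) (a b : K) : a * b = b * a := by
  set z := (a * b) * (b * a)⁻¹ with hz
  have hphiz : L.phi u₀ z = 0 := by
    rw [hz, L.phi_hom hng hu₀, L.phi_inv hng hu₀, L.phi_hom hng hu₀,
      L.phi_hom hng hu₀]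
    ring
  have hz1 : z = 1 := by
    by_contra hzne
    rcases L.expa_or hng hzne with h | h
    · have := L.phi_pos hng hu₀ h
      rw [hphiz] at this
      exact lt_irrefl 0 this
    · have := L.phi_pos hng hu₀ h
      rw [L.phi_inv hng hu₀, hphiz] at this
      simp at this
  exact mul_inv_eq_one.1 hz1

end Cut

theorem exists_global : ∃ x ∈ Ioo A B, ∀ k : K, T k x = x := by
  by_contra hng
  by_cases hK : ∀ k : K, k = 1
  · obtain ⟨x, hx⟩ := L.nonempty
    exact hng ⟨x, hx, fun k => by rw [hK k]; exact L.one x hx⟩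
  · push_neg at hK
    obtain ⟨k₀, hk₀⟩ := hK
    have hu₀ : ∃ u₀ : K, L.Expa u₀ := by
      rcases L.expa_or hng hk₀ with h | h
      · exact ⟨k₀, h⟩
      · exact ⟨k₀⁻¹, h⟩
    obtain ⟨u₀, hu₀⟩ := hu₀
    apply hng
    refine ⟨L.fx k₀, L.fx_mem k₀, fun k => ?_⟩
    by_cases hk : k = 1
    · rw [hk]; exact L.one _ (L.fx_mem k₀)
    · have hcom : k₀ * k = k * k₀ := L.abelian hng hu₀ k₀ k
      have h1 : T k₀ (T k (L.fx k₀)) = T k (L.fx k₀) := by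
        rw [← L.mul k₀ k _ (L.fx_mem k₀), hcom, L.mul k k₀ _ (L.fx_mem k₀), L.fx_fixed k₀]
      exact L.eq_fx hk₀ (L.mapsTo k _ (L.fx_mem k₀)) h1


end LineAction

section CircleChart

open Real

variable (p : Circle)

/-- base angle of `p` -/
def t0 : ℝ := Complex.arg (p : ℂ)

/-- the antipode of `p` -/
def pm : Circle := Circle.exp (t0 p + π)

/-- angle chart on the circle centered away from `p` -/
def chi (z : Circle) : ℝ := t0 p + π + Complex.arg ((z : ℂ) / ((pm p : ℂ)))

theorem AB_lt : t0 p < t0 p + 2 * π := by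
  have := Real.two_pi_pos
  linarith

theorem exp_t0 : Circle.exp (t0 p) = p := Circle.exp_arg p

theorem exp_inj2 {x y : ℝ} (hx : x ∈ Ico (t0 p) (t0 p + 2 * π))
    (hy : y ∈ Ico (t0 p) (t0 p + 2 * π)) (h : Circle.exp x = Circle.exp y) : x = y := by
  obtain ⟨m, hm⟩ := Circle.exp_eq_exp.1 h
  have hpi := Real.two_pi_pos
  have habs : |x - y| < 2 * π := by
    rw [abs_sub_lt_iff]
    constructor
    · have := hx.2
      have := hy.1
      linarith
    · have := hy.2
      have := hx.1
      linarith
  have hm0 : m = 0 := by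
    by_contra hm0
    have h1 : (1 : ℝ) ≤ |(m : ℝ)| := by
      have : (1 : ℤ) ≤ |m| := Int.one_le_abs hm0
      calc (1 : ℝ) = ((1 : ℤ) : ℝ) := by norm_num
        _ ≤ ((|m| : ℤ) : ℝ) := by exact_mod_cast this
        _ = |(m : ℝ)| := by push_cast; ring
    have h2 : |x - y| = |(m : ℝ)| * (2 * π) := by
      rw [hm]
      rw [show y + (m : ℝ) * (2 * π) - y = (m : ℝ) * (2 * π) by ring]
      rw [abs_mul]
      rw [abs_of_pos hpi]
    nlinarith
  rw [hm0] at hm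
  simpa using hm

theorem mem_ne_p {x : ℝ} (hx : x ∈ Ioo (t0 p) (t0 p + 2 * π)) : Circle.exp x ≠ p := by
  intro h
  rw [← exp_t0 p] at h
  have hIco : x ∈ Ico (t0 p) (t0 p + 2 * π) := ⟨hx.1.le, hx.2⟩
  have ht : t0 p ∈ Ico (t0 p) (t0 p + 2 * π) := ⟨le_refl _, AB_lt p⟩
  have := exp_inj2 p hIco ht h
  rw [this] at hx
  exact lt_irrefl _ hx.1

theorem div_pm_eq {z : Circle} (h : z / pm p = Circle.exp π) : z = p := by
  have h1 : z = Circle.exp π * pm p := by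
    rw [← h, div_eq_mul_inv, mul_assoc, inv_mul_cancel, mul_one]
  rw [h1, pm]
  rw [← Circle.exp_add]
  rw [show π + (t0 p + π) = t0 p + 2 * π by ring]
  rw [Circle.exp_add_two_pi]
  exact exp_t0 p

theorem coe_div_pm (z : Circle) : ((z / pm p : Circle) : ℂ) = (z : ℂ) / ((pm p : ℂ)) := by
  simp

theorem arg_ne_pi {z : Circle} (hz : z ≠ p) :
    Complex.arg ((z : ℂ) / ((pm p : ℂ))) ≠ π := by
  intro h
  apply hz
  apply div_pm_eq p
  have h2 := Circle.exp_arg (z / pm p)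
  have h3 : Complex.arg ((z / pm p : Circle) : ℂ) = π := by rw [coe_div_pm p z]; exact h
  rw [h3] at h2
  exact h2.symm

theorem chi_mem {z : Circle} (hz : z ≠ p) : chi p z ∈ Ioo (t0 p) (t0 p + 2 * π) := by
  have h1 := Complex.neg_pi_lt_arg ((z : ℂ) / ((pm p : ℂ)))
  have h2 := Complex.arg_le_pi ((z : ℂ) / ((pm p : ℂ)))
  have h3 := arg_ne_pi p hz
  have h4 : Complex.arg ((z : ℂ) / ((pm p : ℂ))) < π := lt_of_le_of_ne h2 h3
  constructor
  · show t0 p < t0 p + π + _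
    linarith
  · show t0 p + π + _ < t0 p + 2 * π
    linarith

theorem exp_chi {z : Circle} (hz : z ≠ p) : Circle.exp (chi p z) = z := by
  show Circle.exp (t0 p + π + Complex.arg ((z : ℂ) / ((pm p : ℂ)))) = z
  rw [Circle.exp_add]
  have h1 : Complex.arg ((z : ℂ) / ((pm p : ℂ))) = Complex.arg ((z / pm p : Circle) : ℂ) := by
    rw [coe_div_pm p z]
  rw [h1]
  rw [Circle.exp_arg (z / pm p)]
  show pm p * (z / pm p) = z
  rw [mul_comm, div_eq_mul_inv, mul_assoc, inv_mul_cancel, mul_one]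

theorem chi_exp {x : ℝ} (hx : x ∈ Ioo (t0 p) (t0 p + 2 * π)) : chi p (Circle.exp x) = x := by
  have h1 := mem_ne_p p hx
  apply exp_inj2 p
  · have := chi_mem p h1
    exact ⟨this.1.le, this.2⟩
  · exact ⟨hx.1.le, hx.2⟩
  · exact exp_chi p h1

theorem chi_continuousAt {z : Circle} (hz : z ≠ p) : ContinuousAt (chi p) z := by
  have hslit : ((z : ℂ) / ((pm p : ℂ))) ∈ Complex.slitPlane := by
    by_contra hc
    simp only [Complex.slitPlane, Set.mem_setOf_eq, not_or, not_lt, ne_eq, not_not] at hc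
    obtain ⟨hre, him⟩ := hc
    set w := ((z : ℂ) / ((pm p : ℂ))) with hw
    have habs : ‖w‖ = 1 := by
      rw [hw, norm_div, Circle.norm_coe, Circle.norm_coe]
      norm_num
    have hwre : w = (w.re : ℂ) := Complex.ext rfl (by simpa using him)
    have habs2 : |w.re| = 1 := by
      rw [hwre] at habs
      rwa [Complex.norm_real, Real.norm_eq_abs] at habs
    have hre1 : w.re = -1 := by
      rcases abs_eq (by norm_num : (0:ℝ) ≤ 1) |>.1 habs2 with h | h
      · exfalso
        rw [h] at hre
        linarith
      · exact h
    have hwm1 : w = -1 := by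
      rw [hwre, hre1]
      norm_num
    apply hz
    apply div_pm_eq p
    apply Subtype.coe_injective
    show ((z / pm p : Circle) : ℂ) = ((Circle.exp π : Circle) : ℂ)
    rw [coe_div_pm p z, ← hw, hwm1, Circle.coe_exp]
    exact (Complex.exp_pi_mul_I).symm
  have hcont_f : Continuous (fun z : Circle => ((z : ℂ) / ((pm p : ℂ)))) :=
    continuous_subtype_val.div_const _
  have harg : ContinuousAt Complex.arg ((z : ℂ) / ((pm p : ℂ))) :=
    Complex.continuousAt_arg hslit
  have : ContinuousAt (fun z : Circle => Complex.arg ((z : ℂ) / ((pm p : ℂ)))) z :=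
    ContinuousAt.comp (x := z) (g := Complex.arg)
      (f := fun z : Circle => ((z : ℂ) / ((pm p : ℂ)))) harg (hcont_f.continuousAt)
  exact continuousAt_const.add this

end CircleChart

end SGFP

/-- Let `G ≤ Homeo⁺(S¹)` be such that every nontrivial element has at most two fixed
points, and let `g, h ∈ G` be nontrivial elements with exactly two fixed points
sharing a fixed point `p`.  If every nontrivial element of `H = ⟨g,h⟩` fixes `p` and
has exactly two fixed points, then `H` has a second global fixed point `q ≠ p`, and
`Fix k = {p, q}` for every nontrivial `k ∈ H`. -/
theorem second_global_fixed_point (G : Subgroup (Circle ≃ₜ Circle))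
    (hor : ∀ g ∈ G, OrientationPreserving g)
    (htwo : ∀ k ∈ G, k ≠ 1 → (FixSet k).encard ≤ 2)
    (g h : Circle ≃ₜ Circle) (hgG : g ∈ G) (hhG : h ∈ G)
    (hg1 : g ≠ 1) (hh1 : h ≠ 1)
    (hgfix : (FixSet g).encard = 2) (hhfix : (FixSet h).encard = 2)
    (p : Circle) (hpg : g p = p) (hph : h p = p)
    (hH : ∀ k ∈ Subgroup.closure ({g, h} : Set (Circle ≃ₜ Circle)), k ≠ 1 →
      k p = p ∧ (FixSet k).encard = 2) :
    ∃ q : Circle, q ≠ p ∧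
      (∀ k ∈ Subgroup.closure ({g, h} : Set (Circle ≃ₜ Circle)), k q = q) ∧
      (∀ k ∈ Subgroup.closure ({g, h} : Set (Circle ≃ₜ Circle)), k ≠ 1 →
        FixSet k = {p, q}) := by
  classical
  set K : Subgroup (Circle ≃ₜ Circle) := Subgroup.closure ({g, h}) with hKdef
  have hsub : ({g, h} : Set (Circle ≃ₜ Circle)) ⊆ ↑G := by
    intro x hx
    rcases hx with rfl | hx
    · exact hgG
    · rw [Set.mem_singleton_iff] at hx
      rw [hx]
      exact hhG
  have hKG : K ≤ G := (Subgroup.closure_le G).2 hsub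
  have hfixp : ∀ k : Circle ≃ₜ Circle, k ∈ K → k p = p := by
    intro k hk
    by_cases h1 : k = 1
    · rw [h1]; rfl
    · exact (hH k hk h1).1
  have happ_ne : ∀ (k : Circle ≃ₜ Circle), k ∈ K → ∀ {z : Circle}, z ≠ p → k z ≠ p := by
    intro k hk z hz hc
    apply hz
    have h2 : k z = k p := by rw [hc, hfixp k hk]
    exact k.injective h2
  set A := SGFP.t0 p with hA
  set B := SGFP.t0 p + 2 * Real.pi with hB
  have hexp_mem : ∀ {x : ℝ}, x ∈ Ioo A B → Circle.exp x ≠ p := fun hx => SGFP.mem_ne_p p hx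
  set θ : ↥K → ℝ → ℝ := fun k x => SGFP.chi p ((k : Circle ≃ₜ Circle) (Circle.exp x)) with hθ
  have hLmapsTo : ∀ (k : ↥K), ∀ x ∈ Ioo A B, θ k x ∈ Ioo A B := by
    intro k x hx
    exact SGFP.chi_mem p (happ_ne _ k.2 (hexp_mem hx))
  have hLone : ∀ x ∈ Ioo A B, θ 1 x = x := by
    intro x hx
    show SGFP.chi p (((1 : ↥K) : Circle ≃ₜ Circle) (Circle.exp x)) = x
    have h1 : ((1 : ↥K) : Circle ≃ₜ Circle) (Circle.exp x) = Circle.exp x := rfl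
    rw [h1]
    exact SGFP.chi_exp p hx
  have hLmul : ∀ (k l : ↥K), ∀ x ∈ Ioo A B, θ (k * l) x = θ k (θ l x) := by
    intro k l x hx
    show SGFP.chi p (((k * l : ↥K) : Circle ≃ₜ Circle) (Circle.exp x)) =
      SGFP.chi p ((k : Circle ≃ₜ Circle)
        (Circle.exp (SGFP.chi p ((l : Circle ≃ₜ Circle) (Circle.exp x)))))
    have h2 : Circle.exp (SGFP.chi p ((l : Circle ≃ₜ Circle) (Circle.exp x)))
        = (l : Circle ≃ₜ Circle) (Circle.exp x) :=
      SGFP.exp_chi p (happ_ne _ l.2 (hexp_mem hx))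
    rw [h2]
    rfl
  have hLcont : ∀ k : ↥K, ContinuousOn (θ k) (Ioo A B) := by
    intro k x hx
    apply ContinuousAt.continuousWithinAt
    have h1 : ContinuousAt (fun x : ℝ => (k : Circle ≃ₜ Circle) (Circle.exp x)) x :=
      ((k : Circle ≃ₜ Circle).continuous.comp Circle.exp.continuous).continuousAt
    have h2 : ContinuousAt (SGFP.chi p) ((k : Circle ≃ₜ Circle) (Circle.exp x)) :=
      SGFP.chi_continuousAt p (happ_ne _ k.2 (hexp_mem hx))
    exact ContinuousAt.comp (x := x) (g := SGFP.chi p)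
      (f := fun x : ℝ => (k : Circle ≃ₜ Circle) (Circle.exp x)) h2 h1
  have hLinj : ∀ (k : ↥K), Set.InjOn (θ k) (Ioo A B) := by
    intro k x hx y hy hxy
    have h1 : (k : Circle ≃ₜ Circle) (Circle.exp x) = (k : Circle ≃ₜ Circle) (Circle.exp y) := by
      have e1 := SGFP.exp_chi p (happ_ne _ k.2 (hexp_mem hx))
      have e2 := SGFP.exp_chi p (happ_ne _ k.2 (hexp_mem hy))
      rw [← e1, ← e2]
      show Circle.exp (θ k x) = Circle.exp (θ k y)
      rw [hxy]
    have h2 := (k : Circle ≃ₜ Circle).injective h1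
    exact SGFP.exp_inj2 p ⟨hx.1.le, hx.2⟩ ⟨hy.1.le, hy.2⟩ h2
  have hLmono : ∀ k : ↥K, StrictMonoOn (θ k) (Ioo A B) := by
    intro k
    rcases ContinuousOn.strictMonoOn_of_injOn_Ioo (SGFP.AB_lt p) (hLcont k) (hLinj k) with
      hm | ha
    · exact hm
    · exfalso
      obtain ⟨F, hF, hFk⟩ := hor (k : Circle ≃ₜ Circle) (hKG k.2)
      have hm : ∀ x ∈ Ioo A B, ∃ m : ℤ, F x = θ k x + m * (2 * Real.pi) := by
        intro x hx
        have h1 : Circle.exp (F x) = Circle.exp (θ k x) := by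
          rw [← hFk x]
          exact (SGFP.exp_chi p (happ_ne _ k.2 (hexp_mem hx))).symm
        obtain ⟨m, hm⟩ := Circle.exp_eq_exp.1 h1
        exact ⟨m, hm⟩
      set mf : ℝ → ℤ := fun x => if hx : x ∈ Ioo A B then (hm x hx).choose else 0 with hmf
      have hmf_spec : ∀ x (hx : x ∈ Ioo A B), F x = θ k x + mf x * (2 * Real.pi) := by
        intro x hx
        rw [hmf]
        simp only [dif_pos hx]
        exact (hm x hx).choose_spec
      have hinj2 : Set.InjOn mf (Ioo A B) := by
        intro x hx y hy hxy
        by_contra hne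
        rcases lt_or_gt_of_ne hne with hlt | hlt
        · have h1 : F x < F y := hF hlt
          have h2 : θ k y < θ k x := ha hx hy hlt
          have e1 := hmf_spec x hx
          have e2 := hmf_spec y hy
          rw [hxy] at e1
          linarith
        · have h1 : F y < F x := hF hlt
          have h2 : θ k x < θ k y := ha hy hx hlt
          have e1 := hmf_spec x hx
          have e2 := hmf_spec y hy
          rw [hxy] at e1
          linarith
      have hcnt : (Ioo A B).Countable :=
        Set.countable_of_injective_of_countable_image hinj2 (Set.to_countable _)
      have hvol := hcnt.measure_zero MeasureTheory.volume
      rw [Real.volume_Ioo] at hvol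
      have hBA : B - A = 2 * Real.pi := by rw [hA, hB]; ring
      rw [hBA] at hvol
      rw [ENNReal.ofReal_eq_zero] at hvol
      have := Real.two_pi_pos
      linarith
  have hLuniq : ∀ k : ↥K, k ≠ 1 → ∃! x, x ∈ Ioo A B ∧ θ k x = x := by
    intro k hk
    have hk' : (k : Circle ≃ₜ Circle) ≠ 1 := by
      intro hc
      exact hk (Subtype.ext hc)
    obtain ⟨hkp, hcard⟩ := hH (k : Circle ≃ₜ Circle) k.2 hk'
    obtain ⟨a, b, hab, hset⟩ := Set.encard_eq_two.1 hcard
    have hpmem : p ∈ ({a, b} : Set Circle) := by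
      rw [← hset]
      exact hkp
    have hexists : ∃ q0, q0 ≠ p ∧ FixSet (k : Circle ≃ₜ Circle) = {p, q0} := by
      rcases hpmem with hpa | hpb
      · refine ⟨b, ?_, ?_⟩
        · rw [hpa]
          exact hab.symm
        · rw [hset, hpa]
      · rw [Set.mem_singleton_iff] at hpb
        refine ⟨a, ?_, ?_⟩
        · rw [hpb]
          exact hab
        · rw [hset, hpb, Set.pair_comm]
    obtain ⟨q0, hq0ne, hset2⟩ := hexists
    have hq0fix : (k : Circle ≃ₜ Circle) q0 = q0 := by
      have : q0 ∈ FixSet (k : Circle ≃ₜ Circle) := by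
        rw [hset2]
        exact Or.inr rfl
      exact this
    set x₀ := SGFP.chi p q0 with hx₀def
    have hx₀J : x₀ ∈ Ioo A B := SGFP.chi_mem p hq0ne
    have hexpx₀ : Circle.exp x₀ = q0 := SGFP.exp_chi p hq0ne
    refine ⟨x₀, ⟨hx₀J, ?_⟩, ?_⟩
    · show SGFP.chi p ((k : Circle ≃ₜ Circle) (Circle.exp x₀)) = x₀
      rw [hexpx₀, hq0fix]
    · rintro y ⟨hyJ, hyfix⟩
      have h1 : (k : Circle ≃ₜ Circle) (Circle.exp y) = Circle.exp y := by
        have h2 := congrArg Circle.exp hyfix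
        rw [SGFP.exp_chi p (happ_ne _ k.2 (hexp_mem hyJ))] at h2
        exact h2
      have h2 : Circle.exp y ∈ FixSet (k : Circle ≃ₜ Circle) := h1
      rw [hset2] at h2
      rcases h2 with h2 | h2
      · exact absurd h2 (hexp_mem hyJ)
      · rw [Set.mem_singleton_iff] at h2
        have h3 : y = SGFP.chi p (Circle.exp y) := (SGFP.chi_exp p hyJ).symm
        rw [h3, h2]
  have L : SGFP.LineAction ↥K A B θ :=
    ⟨SGFP.AB_lt p, hLmapsTo, hLmono, hLcont, hLone, hLmul, hLuniq⟩
  obtain ⟨xs, hxsJ, hxsfix⟩ := L.exists_global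
  set q := Circle.exp xs with hqdef
  have hqne : q ≠ p := SGFP.mem_ne_p p hxsJ
  have hfixq : ∀ k ∈ K, k q = q := by
    intro k hk
    have h1 := hxsfix ⟨k, hk⟩
    have h2 := congrArg Circle.exp h1
    rw [SGFP.exp_chi p (happ_ne _ hk (hexp_mem hxsJ))] at h2
    exact h2
  refine ⟨q, hqne, fun k hk => hfixq k hk, ?_⟩
  intro k hk hk1
  obtain ⟨hkp, hcard⟩ := hH k hk hk1
  have hsub2 : ({p, q} : Set Circle) ⊆ FixSet k := by
    rintro z (rfl | hz)
    · exact hkp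
    · rw [Set.mem_singleton_iff] at hz
      rw [hz]
      exact hfixq k hk
  have hfin : (FixSet k).Finite := by
    rw [← Set.encard_lt_top_iff, hcard]
    exact lt_of_le_of_ne le_top (by decide)
  have hcard2 : ({p, q} : Set Circle).encard = 2 := Set.encard_pair (Ne.symm hqne)
  exact (hfin.eq_of_subset_of_encard_le' hsub2 (by rw [hcard, hcard2])).symm
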